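/- One-step progress of the LMM update with Polyak stepsize: under the setting of the context, assume γ ≤ min{1, C_lb/L}, λ ≥ C_lb·‖z − z*‖, and |⟨v − P(A,λ)v, z − z*⟩| ≤ (1/4)·(h(z) − h(z*)). Then ‖F(x') − z*‖² ≤ ‖z − z*‖² − (γ/8)·(h(z) − h(z*))²/‖Π_A v‖². -/

import Mathlib

set_option maxHeartbeats 1000000


open scoped RealInnerProductSpace

noncomputable section

variable {E Y : Type*} [NormedAddCommGroup E] [InnerProductSpace ℝ E] [FiniteDimensional ℝ E]
  [NormedAddCommGroup Y] [InnerProductSpace ℝ Y] [FiniteDimensional ℝ Y]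

/-- `v` is a subgradient of `h` at `z`. -/
def IsSubgradientAt (h : Y → ℝ) (v z : Y) : Prop :=
  ∀ y : Y, h z + ⟪v, y - z⟫ ≤ h y

/-- `B(A,λ) = (A*∘A + λ·id)⁻¹`. -/
def Bop (A : E →L[ℝ] Y) (lam : ℝ) : E →L[ℝ] E :=
  (ContinuousLinearMap.adjoint A ∘L A + lam • ContinuousLinearMap.id ℝ E).inverse

/-- `P(A,λ) = A ∘ B(A,λ) ∘ A*`. -/
def Pop (A : E →L[ℝ] Y) (lam : ℝ) : Y →L[ℝ] Y :=
  A ∘L Bop A lam ∘L ContinuousLinearMap.adjoint A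

/-- `Π_A`, the orthogonal projection of `Y` onto the range of `A`. -/
def projRange (A : E →L[ℝ] Y) : Y →L[ℝ] Y :=
  (LinearMap.range (A : E →ₗ[ℝ] Y)).subtypeL ∘L
    Submodule.orthogonalProjectionOnto (LinearMap.range (A : E →ₗ[ℝ] Y))

theorem polyineq (P g : ℝ) (h0 : 0 ≤ P) (h1 : P ≤ g) (hg : 0 < g) :
    P^2*g^4 + 2*P*(g-P)*g^4 + 16/9*(P^2*(g-P))^2 ≤ 11/8*g^6 := by
  have haux : P^2*(g-P) ≤ 4/27*g^3 := by
    nlinarith [mul_nonneg (sq_nonneg (P - 2/3*g)) (by linarith : (0:ℝ) ≤ P + g/3)]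
  have haux0 : 0 ≤ P^2*(g-P) := mul_nonneg (sq_nonneg P) (by linarith)
  have hsq : (P^2*(g-P))^2 ≤ (4/27*g^3)^2 := by
    apply sq_le_sq' <;> nlinarith [pow_pos hg 3]
  have hmain : P^2*g^4 + 2*P*(g-P)*g^4 ≤ g^6 := by
    nlinarith [mul_nonneg (sq_nonneg (g-P)) (pow_pos hg 4).le]
  nlinarith [pow_pos hg 6]

theorem scalar_step (D g N P dn en lam γ Clb L γk W R : ℝ)
    (hD : 0 < D) (hg : 0 < g) (hN : 0 < N) (hP0 : 0 ≤ P) (hdn : 0 ≤ dn) (hen : 0 ≤ en)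
    (hlam : 0 < lam) (hγ : 0 < γ) (hClb : 0 < Clb) (hL : 0 < L)
    (hγk : γk = γ * D / g^2)
    (f3 : P^2 + lam*dn^2 ≤ g*P)
    (hpzN : 3/4*D ≤ P*N)
    (hW2 : W^2 ≤ N^2 - 3/2*γk*D + γk^2*P^2) (hW0 : 0 ≤ W)
    (henb : en ≤ L*γk^2*dn^2)
    (hγ1 : γ ≤ 1) (hγCL : γ*L ≤ Clb) (hlamge : Clb*N ≤ lam)
    (hR : R ≤ W + en) (hR0 : 0 ≤ R) :
    R^2 ≤ N^2 - γ/8*D^2/g^2 := by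
  have hγk0 : 0 < γk := by rw [hγk]; positivity
  have hγkg : γk * g^2 = γ * D := by rw [hγk]; field_simp
  have hPg : P ≤ g := by nlinarith [mul_nonneg hlam.le (sq_nonneg dn)]
  have hP : 0 < P := by nlinarith
  have hld : lam*dn^2 ≤ P*(g-P) := by nlinarith
  have hc1 : en * (γ*N) ≤ γk^2 * (P*(g-P)) := by
    have h1 : γ*N*L ≤ lam := by nlinarith
    have h2 : en * (γ*N) ≤ L*γk^2*dn^2 * (γ*N) :=
      mul_le_mul_of_nonneg_right henb (by positivity)
    have h3 : L*γk^2*dn^2 * (γ*N) = γk^2 * ((γ*N*L) * dn^2) := by ring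
    have h4 : (γ*N*L) * dn^2 ≤ lam * dn^2 :=
      mul_le_mul_of_nonneg_right h1 (sq_nonneg dn)
    calc en * (γ*N) ≤ γk^2 * ((γ*N*L) * dn^2) := by rw [← h3]; exact h2
      _ ≤ γk^2 * (lam * dn^2) := mul_le_mul_of_nonneg_left h4 (sq_nonneg γk)
      _ ≤ γk^2 * (P*(g-P)) := mul_le_mul_of_nonneg_left hld (sq_nonneg γk)
  have hB2 : en * N * g^2 ≤ γk * D * (P*(g-P)) := by
    have h5 : γ*(en*N*g^2) ≤ γ*(γk*D*(P*(g-P))) := by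
      calc γ*(en*N*g^2) = en*(γ*N)*g^2 := by ring
        _ ≤ γk^2*(P*(g-P))*g^2 := mul_le_mul_of_nonneg_right hc1 (sq_nonneg g)
        _ = γk*(γk*g^2)*(P*(g-P)) := by ring
        _ = γ*(γk*D*(P*(g-P))) := by rw [hγkg]; ring
    exact le_of_mul_le_mul_left h5 hγ
  have hB1 : γk^2*P^2*g^2 ≤ γk*D*P^2 := by
    have h6 : 0 ≤ (1-γ)*(γk*D*P^2) :=
      mul_nonneg (by linarith) (mul_nonneg (mul_nonneg hγk0.le hD.le) (sq_nonneg P))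
    calc γk^2*P^2*g^2 = γk*(γk*g^2)*P^2 := by ring
      _ = γ*(γk*D*P^2) := by rw [hγkg]; ring
      _ ≤ γk*D*P^2 := by linarith
  have hKg : γk*D*g^2 ≤ 16/9*P^2*N^2 := by
    have hD169 : D^2 ≤ 16/9*(P*N)^2 := by nlinarith
    have : γk*g^2*D = γ*D^2 := by rw [hγkg]; ring
    nlinarith [mul_pos hP hN]
  have hB3' : en^2 * g^6 ≤ γk*D*(16/9*(P^2*(g-P))^2) := by
    have hsq : (en*N*g^2)^2 ≤ (γk*D*(P*(g-P)))^2 := by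
      apply sq_le_sq' _ hB2
      nlinarith [mul_nonneg (mul_nonneg hen hN.le) (sq_nonneg g),
        mul_nonneg (mul_nonneg hγk0.le hD.le) (mul_nonneg hP.le (by linarith : (0:ℝ) ≤ g - P))]
    have hKD2 : 0 ≤ γk*D*(P*(g-P))^2 :=
      mul_nonneg (mul_nonneg hγk0.le hD.le) (sq_nonneg _)
    have h11 : en^2*g^6*N^2 ≤ (γk*D*(16/9*(P^2*(g-P))^2))*N^2 := by
      calc en^2*g^6*N^2 = (en*N*g^2)^2*g^2 := by ring
        _ ≤ (γk*D*(P*(g-P)))^2*g^2 := mul_le_mul_of_nonneg_right hsq (sq_nonneg g)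
        _ = (γk*D*g^2)*(γk*D*(P*(g-P))^2) := by ring
        _ ≤ (16/9*P^2*N^2)*(γk*D*(P*(g-P))^2) := mul_le_mul_of_nonneg_right hKg hKD2
        _ = (γk*D*(16/9*(P^2*(g-P))^2))*N^2 := by ring
    exact le_of_mul_le_mul_right h11 (by positivity)
  have hKpos : 0 < γk*D := mul_pos hγk0 hD
  have hpoly := polyineq P g hP0 hPg hg
  have hfinal : 2*N*en + en^2 + γk^2*P^2 ≤ 11/8*(γk*D) := by
    have h8 : (2*N*en + en^2 + γk^2*P^2) * g^6 ≤
        γk*D*(2*(P*(g-P))*g^4 + 16/9*(P^2*(g-P))^2 + P^2*g^4) := by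
      nlinarith [mul_le_mul_of_nonneg_right hB2 (by positivity : (0:ℝ) ≤ g^4),
        mul_le_mul_of_nonneg_right hB1 (by positivity : (0:ℝ) ≤ g^4)]
    have h9 : γk*D*(2*(P*(g-P))*g^4 + 16/9*(P^2*(g-P))^2 + P^2*g^4) ≤ γk*D*(11/8*g^6) := by
      nlinarith [hpoly, hKpos]
    have h10 : (2*N*en + en^2 + γk^2*P^2) * g^6 ≤ (11/8*(γk*D)) * g^6 := by nlinarith
    exact le_of_mul_le_mul_right h10 (by positivity)
  have hWN : W ≤ N := by
    have : W^2 ≤ N^2 := by nlinarith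
    exact (pow_le_pow_iff_left₀ hW0 hN.le (by norm_num)).mp this
  have hgoal : R^2 ≤ N^2 - 1/8*(γk*D) := by
    have hRW : R^2 ≤ (W+en)^2 := by
      apply sq_le_sq' _ hR
      linarith
    have hWen : en*W ≤ en*N := mul_le_mul_of_nonneg_left hWN hen
    have hexp : (W+en)^2 = W^2 + 2*(en*W) + en^2 := by ring
    linarith [hW2, hfinal, hRW, hWen, hexp]
  have : γ/8*D^2/g^2 = 1/8*(γk*D) := by rw [hγk]; field_simp
  linarith [hgoal, this.ge, this.le]

lemma Bop_spec (A : E →L[ℝ] Y) {lam : ℝ} (hlam : 0 < lam) (u : E) :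
    ContinuousLinearMap.adjoint A (A (Bop A lam u)) + lam • Bop A lam u = u := by
  set T : E →L[ℝ] E := ContinuousLinearMap.adjoint A ∘L A + lam • ContinuousLinearMap.id ℝ E with hT
  have hTapp : ∀ w, T w = ContinuousLinearMap.adjoint A (A w) + lam • w := fun w => rfl
  have hinj : Function.Injective T := by
    intro a b hab
    have hz : T (a - b) = 0 := by rw [map_sub, hab, sub_self]
    have h0 : (0:ℝ) = ‖A (a-b)‖^2 + lam * ‖a-b‖^2 := by
      have := congrArg (fun w => ⟪w, a - b⟫) hz
      simp only [hTapp, inner_add_left, ContinuousLinearMap.adjoint_inner_left,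
        real_inner_smul_left, inner_zero_left, real_inner_self_eq_norm_sq] at this
      linarith [this]
    have hab0 : ‖a - b‖ = 0 := by
      by_contra hne
      have hpos : 0 < ‖a - b‖ := lt_of_le_of_ne (norm_nonneg _) (Ne.symm hne)
      nlinarith [sq_nonneg ‖A (a-b)‖, mul_pos hlam (pow_pos hpos 2)]
    have := norm_eq_zero.mp hab0
    exact sub_eq_zero.mp this
  have hbij : Function.Bijective (T : E →ₗ[ℝ] E) :=
    ⟨hinj, (LinearMap.injective_iff_surjective (f := (T : E →ₗ[ℝ] E))).mp hinj⟩
  let e0 : E ≃ₗ[ℝ] E := LinearEquiv.ofBijective (T : E →ₗ[ℝ] E) hbij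
  let e : E ≃L[ℝ] E := e0.toContinuousLinearEquiv
  have hTe : T = (e : E →L[ℝ] E) := by ext w; rfl
  have hBop : Bop A lam = (e.symm : E →L[ℝ] E) := by
    rw [Bop, ← hT, hTe, ContinuousLinearMap.inverse_equiv]
  have : T (Bop A lam u) = u := by
    rw [hBop, hTe]
    exact e.apply_symm_apply u
  rw [← hTapp]; exact this

/-- One-step progress of the LMM update with the Polyak stepsize. -/
theorem lmm_one_step_progress
    (h : Y → ℝ) (hconv : ConvexOn ℝ Set.univ h)
    (F : E → Y) (F' : E → E →L[ℝ] Y)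
    (hdiff : ∀ u : E, HasFDerivAt F (F' u) u)
    (x : E) (zs : Y) (hzs : h zs ≤ h (F x))
    (v : Y) (hv : IsSubgradientAt h v (F x))
    (hPiv : projRange (F' x) v ≠ 0)
    (lam γ Clb L : ℝ) (hlam : 0 < lam) (hγpos : 0 < γ) (hClb : 0 < Clb) (hLpos : 0 < L)
    (γk : ℝ) (hγk : γk = γ * (h (F x) - h zs) / ‖projRange (F' x) v‖ ^ 2)
    (x' : E) (hx' : x' = x - γk • Bop (F' x) lam (ContinuousLinearMap.adjoint (F' x) v))
    (hLipseg : ∀ u w : E, u ∈ segment ℝ x x' → w ∈ segment ℝ x x' →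
      ‖F' u - F' w‖ ≤ L * ‖u - w‖)
    (hγle : γ ≤ min 1 (Clb / L))
    (hlamge : Clb * ‖F x - zs‖ ≤ lam)
    (hinner : |⟪v - Pop (F' x) lam v, F x - zs⟫| ≤ 1 / 4 * (h (F x) - h zs)) :
    ‖F x' - zs‖ ^ 2 ≤
      ‖F x - zs‖ ^ 2 - γ / 8 * (h (F x) - h zs) ^ 2 / ‖projRange (F' x) v‖ ^ 2 := by
  have hγ1 : γ ≤ 1 := hγle.trans (min_le_left _ _)
  have hγCL : γ * L ≤ Clb := by
    have := hγle.trans (min_le_right _ _)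
    exact (le_div_iff₀ hLpos).mp this
  set A := F' x with hA
  set z := F x with hz
  set d := Bop A lam (ContinuousLinearMap.adjoint A v) with hd
  set p := Pop A lam v with hp
  have hpAd : p = A d := rfl
  have hDnn : 0 ≤ h z - h zs := by linarith
  have hg : 0 < ‖projRange A v‖ := norm_pos_iff.mpr hPiv
  -- key identity
  have hkey := Bop_spec A hlam (ContinuousLinearMap.adjoint A v)
  have hkey2 : ‖p‖^2 + lam*‖d‖^2 = ⟪v, p⟫ := by
    have h1 := congrArg (fun w => (inner ℝ w d : ℝ)) hkey
    simp only [inner_add_left, ContinuousLinearMap.adjoint_inner_left,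
      real_inner_smul_left, real_inner_self_eq_norm_sq] at h1
    rw [hpAd, ← hd] at *
    rw [real_inner_self_eq_norm_sq, real_inner_self_eq_norm_sq] at h1
    exact h1
  -- projection
  have hmem : p ∈ LinearMap.range (A : E →ₗ[ℝ] Y) := ⟨d, hpAd.symm⟩
  have hproj : ⟪v, p⟫ = ⟪projRange A v, p⟫ := by
    have horth : v - (Submodule.orthogonalProjectionOnto (LinearMap.range (A : E →ₗ[ℝ] Y)) v : Y) ∈
        (LinearMap.range (A : E →ₗ[ℝ] Y))ᗮ := Submodule.sub_starProjection_mem_orthogonal v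
    have h2 : ⟪p, v - (Submodule.orthogonalProjectionOnto (LinearMap.range (A : E →ₗ[ℝ] Y)) v : Y)⟫ = 0 :=
      (Submodule.mem_orthogonal _ _).mp horth p hmem
    have h3 : projRange A v = (Submodule.orthogonalProjectionOnto (LinearMap.range (A : E →ₗ[ℝ] Y)) v : Y) := rfl
    rw [h3]
    have h4 : ⟪v - (Submodule.orthogonalProjectionOnto (LinearMap.range (A : E →ₗ[ℝ] Y)) v : Y), p⟫ = 0 :=
      (real_inner_comm _ _).trans h2
    rw [inner_sub_left] at h4
    linarith
  have f3 : ‖p‖^2 + lam*‖d‖^2 ≤ ‖projRange A v‖ * ‖p‖ := by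
    rw [hkey2, hproj]
    exact real_inner_le_norm _ _
  -- subgradient inequality
  have hvz : h z - h zs ≤ ⟪v, z - zs⟫ := by
    have h5 := hv zs
    have h6 : ⟪v, zs - z⟫ = -⟪v, z - zs⟫ := by
      rw [show zs - z = -(z - zs) by abel, inner_neg_right]
    rw [h6] at h5
    linarith
  have hinner' : 3/4*(h z - h zs) ≤ ⟪p, z - zs⟫ := by
    have h7 : ⟪v - p, z - zs⟫ ≤ 1/4*(h z - h zs) := (abs_le.mp hinner).2
    rw [inner_sub_left] at h7
    linarith
  have hpzN : 3/4*(h z - h zs) ≤ ‖p‖ * ‖z - zs‖ :=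
    hinner'.trans (real_inner_le_norm _ _)
  -- case split on D = 0
  rcases hDnn.eq_or_lt with hD0 | hD0
  · -- h z = h zs : no progress needed
    have hγk0 : γk = 0 := by rw [hγk, ← hD0]; ring
    have hx'x : x' = x := by rw [hx', hγk0, zero_smul, sub_zero]
    rw [hx'x, ← hD0]
    ring_nf
    rw [← hz]
  · -- main case
    have hD : 0 < h z - h zs := hD0
    have hN : 0 < ‖z - zs‖ := by
      rcases (norm_nonneg (z - zs)).lt_or_eq with hN' | hN'
      · exact hN'
      · exfalso
        rw [← hN'] at hpzN
        nlinarith [norm_nonneg p]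
    have hγknn : 0 ≤ γk := by
      rw [hγk]; positivity
    -- Taylor / mean value bound
    have hx'x : x' - x = -(γk • d) := by rw [hx']; abel
    have hseg : Convex ℝ (segment ℝ x x') := convex_segment x x'
    have hbound : ∀ u ∈ segment ℝ x x', ‖F' u - A‖ ≤ L * ‖x' - x‖ := by
      intro u hu
      have h8 := hLipseg u x hu (left_mem_segment ℝ x x')
      have h9 : ‖u - x‖ ≤ ‖x' - x‖ := by
        obtain ⟨a, b, ha, hb, hab, rfl⟩ := hu
        have ha' : a = 1 - b := by linarith
        have hb1 : b ≤ 1 := by linarith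
        have h10 : a • x + b • x' - x = b • (x' - x) := by
          rw [ha', sub_smul, one_smul, smul_sub]; abel
        rw [h10, norm_smul, Real.norm_eq_abs, abs_of_nonneg hb]
        nlinarith [norm_nonneg (x' - x)]
      calc ‖F' u - A‖ ≤ L * ‖u - x‖ := h8
        _ ≤ L * ‖x' - x‖ := mul_le_mul_of_nonneg_left h9 hLpos.le
    have hTaylor : ‖F x' - F x - A (x' - x)‖ ≤ (L * ‖x' - x‖) * ‖x' - x‖ :=
      hseg.norm_image_sub_le_of_norm_hasFDerivWithin_le'
        (fun u _ => (hdiff u).hasFDerivWithinAt) hbound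
        (left_mem_segment ℝ x x') (right_mem_segment ℝ x x')
    have hnx'x : ‖x' - x‖ = γk * ‖d‖ := by
      rw [hx'x, norm_neg, norm_smul, Real.norm_eq_abs, abs_of_nonneg hγknn]
    have henb : ‖F x' - F x - A (x' - x)‖ ≤ L * γk^2 * ‖d‖^2 := by
      calc ‖F x' - F x - A (x' - x)‖ ≤ (L * ‖x' - x‖) * ‖x' - x‖ := hTaylor
        _ = L * γk^2 * ‖d‖^2 := by rw [hnx'x]; ring
    -- decomposition
    have hAx'x : A (x' - x) = -(γk • p) := by
      rw [hx'x, map_neg, map_smul, hpAd]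
    have hdecomp : F x' - zs = (z - zs - γk • p) + (F x' - F x - A (x' - x)) := by
      rw [hAx'x, hz]; abel
    have hR : ‖F x' - zs‖ ≤ ‖z - zs - γk • p‖ + ‖F x' - F x - A (x' - x)‖ := by
      rw [hdecomp]; exact norm_add_le _ _
    -- W^2 bound
    have hW2 : ‖z - zs - γk • p‖^2 ≤
        ‖z - zs‖^2 - 3/2*γk*(h z - h zs) + γk^2*‖p‖^2 := by
      have h12 : ‖z - zs - γk • p‖^2 =
          ‖z - zs‖^2 - 2*(γk*⟪z - zs, p⟫) + γk^2*‖p‖^2 := by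
        rw [norm_sub_sq_real, real_inner_smul_right, norm_smul, Real.norm_eq_abs,
          abs_of_nonneg hγknn, mul_pow]
      have h13 : γk*(3/4*(h z - h zs)) ≤ γk*⟪z - zs, p⟫ := by
        rw [real_inner_comm]
        exact mul_le_mul_of_nonneg_left hinner' hγknn
      nlinarith [h12, h13]
    -- apply the scalar lemma
    exact scalar_step (h z - h zs) ‖projRange A v‖ ‖z - zs‖ ‖p‖ ‖d‖
      ‖F x' - F x - A (x' - x)‖ lam γ Clb L γk ‖z - zs - γk • p‖ ‖F x' - zs‖
      hD hg hN (norm_nonneg _) (norm_nonneg _) (norm_nonneg _)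
      hlam hγpos hClb hLpos hγk f3 hpzN hW2 (norm_nonneg _) henb
      hγ1 hγCL hlamge hR (norm_nonneg _)
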